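/- Let Φ_s : ℝ^d × ℝ^d → ℝ^d × ℝ^d be a flow (a one-parameter group of homeomorphisms) such that for every compact set K ⊂ ℝ^d × ℝ^d containing no stationary points of Φ, there exist constants α, β > 0 with α|s| − β ≤ ‖Φ_s(x,ξ)‖ ≤ α|s| + β for all (x,ξ) ∈ K and all s ∈ ℝ. Then every finite positive Radon measure μ on ℝ^d × ℝ^d that is invariant under Φ_s (i.e., (Φ_s)_*μ = μ for all s) is supported on the set of stationary points of Φ. -/

import Mathlib

open MeasureTheory Filter Topology

/-- A flow on `ℝ^d × ℝ^d` whose non-stationary compact sets travel to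
infinity at uniform linear speed has all its finite invariant measures supported
on the set of stationary points. -/
theorem stmt_0 {d : ℕ}
    (Φ : ℝ → (EuclideanSpace ℝ (Fin d) × EuclideanSpace ℝ (Fin d)) →
      (EuclideanSpace ℝ (Fin d) × EuclideanSpace ℝ (Fin d)))
    (hcont : ∀ s, Continuous (Φ s))
    (hid : Φ 0 = id)
    (hgroup : ∀ s t, Φ (s + t) = Φ s ∘ Φ t)
    (hdisp : ∀ K : Set (EuclideanSpace ℝ (Fin d) × EuclideanSpace ℝ (Fin d)),
      IsCompact K → (∀ p ∈ K, ¬ (∀ s : ℝ, Φ s p = p)) →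
      ∃ α > (0:ℝ), ∃ β > (0:ℝ), ∀ p ∈ K, ∀ s : ℝ,
        α * |s| - β ≤ ‖Φ s p‖ ∧ ‖Φ s p‖ ≤ α * |s| + β)
    (μ : Measure (EuclideanSpace ℝ (Fin d) × EuclideanSpace ℝ (Fin d)))
    [IsFiniteMeasure μ]
    (hinv : ∀ s : ℝ, μ.map (Φ s) = μ) :
    μ {p | ¬ (∀ s : ℝ, Φ s p = p)} = 0 := by
  set N := {p : EuclideanSpace ℝ (Fin d) × EuclideanSpace ℝ (Fin d) |
    ¬ (∀ s : ℝ, Φ s p = p)} with hN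
  have hNopen : IsOpen N := by
    have hclosed : IsClosed {p : EuclideanSpace ℝ (Fin d) × EuclideanSpace ℝ (Fin d) |
        ∀ s : ℝ, Φ s p = p} := by
      have : {p : EuclideanSpace ℝ (Fin d) × EuclideanSpace ℝ (Fin d) | ∀ s : ℝ, Φ s p = p}
          = ⋂ s : ℝ, {p | Φ s p = p} := by ext p; simp
      rw [this]
      exact isClosed_iInter fun s => isClosed_eq (hcont s) continuous_id
    have hNc : N = {p : EuclideanSpace ℝ (Fin d) × EuclideanSpace ℝ (Fin d) |
        ∀ s : ℝ, Φ s p = p}ᶜ := rfl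
    rw [hNc]
    exact hclosed.isOpen_compl
  have key : ∀ K : Set (EuclideanSpace ℝ (Fin d) × EuclideanSpace ℝ (Fin d)),
      K ⊆ N → IsCompact K → μ K = 0 := by
    intro K hKN hK
    obtain ⟨α, hα, β, hβ, hKd⟩ := hdisp K hK (fun p hp => hKN hp)
    by_contra hμK
    set s : ℕ → ℝ := fun n => (n : ℝ) * (2 * β + 1) / α with hs
    set A : ℕ → Set (EuclideanSpace ℝ (Fin d) × EuclideanSpace ℝ (Fin d)) :=
      fun n => Φ (s n) '' K with hA
    have hAm : ∀ n, MeasurableSet (A n) := fun n => (hK.image (hcont _)).measurableSet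
    have hμA : ∀ n, μ K ≤ μ (A n) := by
      intro n
      calc μ K ≤ μ (Φ (s n) ⁻¹' (A n)) :=
            measure_mono (Set.subset_preimage_image _ _)
        _ = (μ.map (Φ (s n))) (A n) :=
            (Measure.map_apply (hcont _).measurable (hAm n)).symm
        _ = μ (A n) := by rw [hinv]
    have hnorm : ∀ n, ∀ p ∈ A n,
        (n : ℝ) * (2 * β + 1) - β ≤ ‖p‖ ∧ ‖p‖ ≤ (n : ℝ) * (2 * β + 1) + β := by
      intro n p hp
      obtain ⟨q, hq, rfl⟩ := hp
      have h := hKd q hq (s n)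
      have hsnn : (0:ℝ) ≤ s n := by positivity
      have habs : α * |s n| = (n : ℝ) * (2 * β + 1) := by
        rw [abs_of_nonneg hsnn, hs]
        field_simp
      rw [habs] at h
      exact h
    have hlt : ∀ m n : ℕ, m < n → Disjoint (A m) (A n) := by
      intro m n hmn
      rw [Set.disjoint_left]
      intro p hpm hpn
      have h1 := (hnorm m p hpm).2
      have h2 := (hnorm n p hpn).1
      have hmn' : (m : ℝ) + 1 ≤ (n : ℝ) := by exact_mod_cast hmn
      nlinarith [h1, h2, hβ]
    have hdisj : Pairwise (Function.onFun Disjoint A) := by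
      intro m n hmn
      rcases hmn.lt_or_gt with h | h
      · exact hlt m n h
      · exact (hlt n m h).symm
    have hsum : (∑' n : ℕ, μ (A n)) ≤ μ Set.univ := by
      rw [← measure_iUnion hdisj hAm]
      exact measure_mono (Set.subset_univ _)
    have htop : (∑' _ : ℕ, μ K) = ⊤ := ENNReal.tsum_const_eq_top_of_ne_zero hμK
    have : (⊤ : ENNReal) ≤ μ Set.univ :=
      htop ▸ le_trans (ENNReal.tsum_le_tsum hμA) hsum
    exact (measure_ne_top μ Set.univ) (top_le_iff.mp this)
  rw [hNopen.measure_eq_iSup_isCompact]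
  refine le_antisymm ?_ zero_le
  refine iSup₂_le fun K hKN => iSup_le fun hKc => (key K hKN hKc).le
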